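/- For every positive integer n, n! = n^{n+1} e^{-n} ∫_0^∞ e^{-np} G(p) dp, where G(p) = s₂'(1+p) − s₁'(1+p) and s₁ : (1,∞) → (0,1), s₂ : (1,∞) → (1,∞) are the two inverse branches of the map s ↦ s − ln s. -/

import Mathlib

open MeasureTheory Set

noncomputable def phiAux : ℝ → ℝ := fun s => s - Real.log s

lemma phiAux_hasDerivAt {x : ℝ} (hx : x ≠ 0) : HasDerivAt phiAux (1 - x⁻¹) x :=
  (hasDerivAt_id x).sub (Real.hasDerivAt_log hx)

lemma phiAux_mono : StrictMonoOn phiAux (Ici 1) := by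
  apply strictMonoOn_of_deriv_pos (convex_Ici 1)
  · exact continuousOn_id.sub (Real.continuousOn_log.mono (fun x hx => by
      simp only [mem_compl_iff, mem_singleton_iff]
      intro h; rw [h] at hx; exact absurd hx (by norm_num)))
  · intro x hx
    rw [interior_Ici] at hx
    have hx1 : (1:ℝ) < x := hx
    rw [(phiAux_hasDerivAt (by linarith)).deriv]
    have : x⁻¹ < 1 := by
      rw [inv_lt_one_iff₀]; right; exact hx1
    linarith

lemma phiAux_anti : StrictAntiOn phiAux (Ioc 0 1) := by
  apply strictAntiOn_of_deriv_neg (convex_Ioc 0 1)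
  · exact continuousOn_id.sub (Real.continuousOn_log.mono (fun x hx => by
      simp only [mem_compl_iff, mem_singleton_iff]
      intro h; rw [h] at hx; exact absurd hx.1 (by norm_num)))
  · intro x hx
    rw [interior_Ioc] at hx
    rw [(phiAux_hasDerivAt (ne_of_gt hx.1)).deriv]
    have : 1 < x⁻¹ := (one_lt_inv₀ hx.1).mpr hx.2
    linarith

lemma phiAux_one : phiAux 1 = 1 := by simp [phiAux]

lemma phiAux_gt_of_gt {s : ℝ} (hs : 1 < s) : 1 < phiAux s := by
  have := phiAux_mono (mem_Ici.mpr le_rfl) (mem_Ici.mpr hs.le) hs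
  rwa [phiAux_one] at this

lemma phiAux_gt_of_lt {s : ℝ} (h0 : 0 < s) (h1 : s < 1) : 1 < phiAux s := by
  have := phiAux_anti (mem_Ioc.mpr ⟨h0, h1.le⟩) (mem_Ioc.mpr ⟨zero_lt_one, le_rfl⟩) h1
  rwa [phiAux_one] at this

theorem stmt7 (s₁ s₂ : ℝ → ℝ)
    (h₁ : ∀ t : ℝ, 1 < t → s₁ t ∈ Ioo (0 : ℝ) 1 ∧ s₁ t - Real.log (s₁ t) = t)
    (h₂ : ∀ t : ℝ, 1 < t → s₂ t ∈ Ioi (1 : ℝ) ∧ s₂ t - Real.log (s₂ t) = t)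
    (n : ℕ) (hn : 0 < n) :
    (n.factorial : ℝ) =
      (n : ℝ) ^ (n + 1) * Real.exp (-(n : ℝ)) *
        ∫ p in Ioi (0 : ℝ), Real.exp (-(n : ℝ) * p) * (deriv s₂ (1 + p) - deriv s₁ (1 + p)) := by
  have hphi2 : ∀ t : ℝ, 1 < t → phiAux (s₂ t) = t := fun t ht => (h₂ t ht).2
  have hphi1 : ∀ t : ℝ, 1 < t → phiAux (s₁ t) = t := fun t ht => (h₁ t ht).2
  have mono2 : StrictMonoOn s₂ (Ioi 1) := by
    intro a ha b hb hab
    by_contra h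
    push_neg at h
    have := phiAux_mono.monotoneOn (mem_Ici.mpr (h₂ b hb).1.le) (mem_Ici.mpr (le_of_lt (h₂ a ha).1)) h
    rw [hphi2 a ha, hphi2 b hb] at this
    exact absurd hab (not_lt.mpr this)
  have anti1 : StrictAntiOn s₁ (Ioi 1) := by
    intro a ha b hb hab
    by_contra h
    push_neg at h
    have := phiAux_anti.antitoneOn
      (mem_Ioc.mpr ⟨(h₁ a ha).1.1, (h₁ a ha).1.2.le⟩)
      (mem_Ioc.mpr ⟨(h₁ b hb).1.1, (h₁ b hb).1.2.le⟩) h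
    rw [hphi1 a ha, hphi1 b hb] at this
    exact absurd hab (not_lt.mpr this)
  have image2 : s₂ '' Ioi 1 = Ioi 1 := by
    ext x
    constructor
    · rintro ⟨t, ht, rfl⟩; exact (h₂ t ht).1
    · intro hx
      have hx1 : (1:ℝ) < x := hx
      have hpx : 1 < phiAux x := phiAux_gt_of_gt hx1
      exact ⟨phiAux x, hpx, phiAux_mono.injOn (mem_Ici.mpr (le_of_lt (h₂ _ hpx).1))
        (mem_Ici.mpr hx1.le) (by rw [hphi2 _ hpx])⟩
  have image1 : s₁ '' Ioi 1 = Ioo 0 1 := by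
    ext x
    constructor
    · rintro ⟨t, ht, rfl⟩; exact (h₁ t ht).1
    · intro hx
      have hpx : 1 < phiAux x := phiAux_gt_of_lt hx.1 hx.2
      exact ⟨phiAux x, hpx, phiAux_anti.injOn
        (mem_Ioc.mpr ⟨(h₁ _ hpx).1.1, (h₁ _ hpx).1.2.le⟩)
        (mem_Ioc.mpr ⟨hx.1, hx.2.le⟩) (by rw [hphi1 _ hpx])⟩
  have cont2 : ∀ t : ℝ, 1 < t → ContinuousAt s₂ t := by
    intro t ht
    refine mono2.continuousAt_of_image_mem_nhds (Ioi_mem_nhds ht) ?_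
    rw [image2]; exact Ioi_mem_nhds (h₂ t ht).1
  have cont1 : ∀ t : ℝ, 1 < t → ContinuousAt s₁ t := by
    intro t ht
    have monoNeg : StrictMonoOn (fun u => -(s₁ u)) (Ioi 1) :=
      fun a ha b hb hab => neg_lt_neg (anti1 ha hb hab)
    have himg : (fun u => -(s₁ u)) '' Ioi 1 = Ioo (-1) 0 := by
      ext y
      simp only [mem_image, mem_Ioo]
      constructor
      · rintro ⟨t', ht', rfl⟩
        have := (h₁ t' ht').1
        exact ⟨by linarith [this.2], by linarith [this.1]⟩
      · rintro ⟨hy1, hy2⟩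
        have hmem : -y ∈ Ioo (0:ℝ) 1 := ⟨by linarith, by linarith⟩
        rw [← image1] at hmem
        obtain ⟨t', ht', hts⟩ := hmem
        exact ⟨t', ht', by rw [hts]; ring⟩
    have hc : ContinuousAt (fun u => -(s₁ u)) t := by
      refine monoNeg.continuousAt_of_image_mem_nhds (Ioi_mem_nhds ht) ?_
      rw [himg]
      exact Ioo_mem_nhds (by linarith [(h₁ t ht).1.2]) (by simpa using (h₁ t ht).1.1)
    have := hc.neg
    simpa only [Pi.neg_def, neg_neg] using this
  have deriv2 : ∀ t : ℝ, 1 < t → HasDerivAt s₂ ((1 - (s₂ t)⁻¹)⁻¹) t := by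
    intro t ht
    have hs : 1 < s₂ t := (h₂ t ht).1
    have hne : s₂ t ≠ 0 := by intro h; rw [h] at hs; norm_num at hs
    have hd : (0:ℝ) < 1 - (s₂ t)⁻¹ := by
      have : (s₂ t)⁻¹ < 1 := by rw [inv_lt_one_iff₀]; right; exact hs
      linarith
    exact HasDerivAt.of_local_left_inverse (cont2 t ht) (phiAux_hasDerivAt hne) (ne_of_gt hd)
      (Filter.eventually_of_mem (Ioi_mem_nhds ht) fun y hy => hphi2 y hy)
  have deriv1 : ∀ t : ℝ, 1 < t → HasDerivAt s₁ ((1 - (s₁ t)⁻¹)⁻¹) t := by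
    intro t ht
    have hs := (h₁ t ht).1
    have hne : s₁ t ≠ 0 := ne_of_gt hs.1
    have hd : 1 - (s₁ t)⁻¹ < 0 := by
      have : 1 < (s₁ t)⁻¹ := (one_lt_inv₀ hs.1).mpr hs.2
      linarith
    exact HasDerivAt.of_local_left_inverse (cont1 t ht) (phiAux_hasDerivAt hne) (ne_of_lt hd)
      (Filter.eventually_of_mem (Ioi_mem_nhds ht) fun y hy => hphi1 y hy)
  have dpos : ∀ p : ℝ, p ∈ Ioi (0:ℝ) → 0 < deriv s₂ (1 + p) := by
    intro p hp
    have ht : (1:ℝ) < 1 + p := by have := mem_Ioi.mp hp; linarith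
    rw [(deriv2 _ ht).deriv]
    have hs : 1 < s₂ (1 + p) := (h₂ _ ht).1
    have h1 : (s₂ (1+p))⁻¹ < 1 := by rw [inv_lt_one_iff₀]; right; exact hs
    have : (0:ℝ) < 1 - (s₂ (1+p))⁻¹ := by linarith
    positivity
  have dneg : ∀ p : ℝ, p ∈ Ioi (0:ℝ) → deriv s₁ (1 + p) < 0 := by
    intro p hp
    have ht : (1:ℝ) < 1 + p := by have := mem_Ioi.mp hp; linarith
    rw [(deriv1 _ ht).deriv]
    have hs := (h₁ _ ht).1
    have h1 : 1 < (s₁ (1+p))⁻¹ := (one_lt_inv₀ hs.1).mpr hs.2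
    have h0 : 1 - (s₁ (1+p))⁻¹ < 0 := by linarith
    exact inv_lt_zero.mpr h0
  set g : ℝ → ℝ := fun s => Real.exp (-(n:ℝ) * (s - Real.log s)) with hgdef
  have hgEq : ∀ x ∈ Ioi (0:ℝ), Real.exp (-((n:ℝ)*x)) * x ^ n = g x := by
    intro x hx
    have hx0 : (0:ℝ) < x := hx
    simp only [hgdef]
    rw [show -(n:ℝ) * (x - Real.log x) = -((n:ℝ)*x) + Real.log x * (n:ℝ) by ring,
      Real.exp_add, ← Real.rpow_def_of_pos hx0, Real.rpow_natCast]
  have hg0 : IntegrableOn (fun x : ℝ => Real.exp (-x) * x ^ n) (Ioi 0) := by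
    have h := Real.GammaIntegral_convergent (s := (n:ℝ)+1) (by positivity)
    have heq : (fun x : ℝ => Real.exp (-x) * x ^ ((n:ℝ) + 1 - 1)) =
        fun x : ℝ => Real.exp (-x) * x ^ n := by
      funext x; rw [add_sub_cancel_right, Real.rpow_natCast]
    rwa [heq] at h
  have hgn : IntegrableOn (fun x : ℝ => Real.exp (-((n:ℝ)*x)) * ((n:ℝ)*x) ^ n) (Ioi 0) := by
    have := (integrableOn_Ioi_comp_mul_left_iff
      (fun x : ℝ => Real.exp (-x) * x ^ n) 0 (a := (n:ℝ)) (by positivity)).mpr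
      (by simpa using hg0)
    simpa using this
  have hgInt : IntegrableOn g (Ioi 0) := by
    have h1 : IntegrableOn
        (fun x : ℝ => ((n:ℝ)^n)⁻¹ * (Real.exp (-((n:ℝ)*x)) * ((n:ℝ)*x) ^ n)) (Ioi 0) :=
      hgn.const_mul _
    refine h1.congr_fun (fun x hx => ?_) measurableSet_Ioi
    have hnn : ((n:ℝ)^n) ≠ 0 := by positivity
    calc ((n:ℝ)^n)⁻¹ * (Real.exp (-((n:ℝ)*x)) * ((n:ℝ)*x) ^ n)
        = Real.exp (-((n:ℝ)*x)) * x ^ n := by rw [mul_pow]; field_simp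
      _ = g x := hgEq x hx
  -- substitution on (1, ∞)
  have himg2 : (fun p : ℝ => s₂ (1 + p)) '' Ioi 0 = Ioi 1 := by
    rw [show (fun p : ℝ => s₂ (1 + p)) = s₂ ∘ (fun p => 1 + p) from rfl, image_comp,
      image_const_add_Ioi, add_zero, image2]
  have hder2 : ∀ p ∈ Ioi (0:ℝ),
      HasDerivWithinAt (fun p => s₂ (1 + p)) (deriv s₂ (1 + p)) (Ioi 0) p := by
    intro p hp
    have ht : (1:ℝ) < 1 + p := by have := mem_Ioi.mp hp; linarith
    have hcomp := (deriv2 _ ht).comp p ((hasDerivAt_id p).const_add 1)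
    rw [mul_one] at hcomp
    rw [(deriv2 _ ht).deriv]
    exact hcomp.hasDerivWithinAt
  have hinj2 : InjOn (fun p : ℝ => s₂ (1 + p)) (Ioi 0) := by
    intro a ha b hb hab
    have h1a : (1:ℝ) + a ∈ Ioi (1:ℝ) := by simp only [mem_Ioi] at ha ⊢; linarith
    have h1b : (1:ℝ) + b ∈ Ioi (1:ℝ) := by simp only [mem_Ioi] at hb ⊢; linarith
    have := mono2.injOn h1a h1b hab
    linarith
  have hsub2 : ∫ x in Ioi (1:ℝ), g x
      = ∫ p in Ioi (0:ℝ), deriv s₂ (1 + p) * Real.exp (-(n:ℝ) * (1 + p)) := by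
    rw [← himg2, integral_image_eq_integral_abs_deriv_smul measurableSet_Ioi hder2 hinj2 g]
    refine setIntegral_congr_fun measurableSet_Ioi fun p hp => ?_
    have ht : (1:ℝ) < 1 + p := by have := mem_Ioi.mp hp; linarith
    rw [abs_of_pos (dpos p hp), smul_eq_mul]
    congr 1
    show Real.exp (-(n:ℝ) * (s₂ (1+p) - Real.log (s₂ (1+p)))) = _
    rw [(h₂ _ ht).2]
  have hint2 : IntegrableOn
      (fun p : ℝ => deriv s₂ (1 + p) * Real.exp (-(n:ℝ) * (1 + p))) (Ioi 0) := by
    have h := (integrableOn_image_iff_integrableOn_abs_deriv_smul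
      measurableSet_Ioi hder2 hinj2 g).mp
      (by rw [himg2]; exact hgInt.mono_set fun x hx => mem_Ioi.mpr (lt_trans zero_lt_one (mem_Ioi.mp hx)))
    refine h.congr_fun (fun p hp => ?_) measurableSet_Ioi
    have ht : (1:ℝ) < 1 + p := by have := mem_Ioi.mp hp; linarith
    beta_reduce
    rw [abs_of_pos (dpos p hp), smul_eq_mul]
    congr 1
    show Real.exp (-(n:ℝ) * (s₂ (1+p) - Real.log (s₂ (1+p)))) = _
    rw [(h₂ _ ht).2]
  -- substitution on (0, 1)
  have himg1 : (fun p : ℝ => s₁ (1 + p)) '' Ioi 0 = Ioo 0 1 := by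
    rw [show (fun p : ℝ => s₁ (1 + p)) = s₁ ∘ (fun p => 1 + p) from rfl, image_comp,
      image_const_add_Ioi, add_zero, image1]
  have hder1 : ∀ p ∈ Ioi (0:ℝ),
      HasDerivWithinAt (fun p => s₁ (1 + p)) (deriv s₁ (1 + p)) (Ioi 0) p := by
    intro p hp
    have ht : (1:ℝ) < 1 + p := by have := mem_Ioi.mp hp; linarith
    have hcomp := (deriv1 _ ht).comp p ((hasDerivAt_id p).const_add 1)
    rw [mul_one] at hcomp
    rw [(deriv1 _ ht).deriv]
    exact hcomp.hasDerivWithinAt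
  have hinj1 : InjOn (fun p : ℝ => s₁ (1 + p)) (Ioi 0) := by
    intro a ha b hb hab
    have h1a : (1:ℝ) + a ∈ Ioi (1:ℝ) := by simp only [mem_Ioi] at ha ⊢; linarith
    have h1b : (1:ℝ) + b ∈ Ioi (1:ℝ) := by simp only [mem_Ioi] at hb ⊢; linarith
    have := anti1.injOn h1a h1b hab
    linarith
  have hsub1 : ∫ x in Ioo (0:ℝ) 1, g x
      = ∫ p in Ioi (0:ℝ), -deriv s₁ (1 + p) * Real.exp (-(n:ℝ) * (1 + p)) := by
    rw [← himg1, integral_image_eq_integral_abs_deriv_smul measurableSet_Ioi hder1 hinj1 g]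
    refine setIntegral_congr_fun measurableSet_Ioi fun p hp => ?_
    have ht : (1:ℝ) < 1 + p := by have := mem_Ioi.mp hp; linarith
    rw [abs_of_neg (dneg p hp), smul_eq_mul]
    congr 1
    show Real.exp (-(n:ℝ) * (s₁ (1+p) - Real.log (s₁ (1+p)))) = _
    rw [(h₁ _ ht).2]
  have hint1 : IntegrableOn
      (fun p : ℝ => -deriv s₁ (1 + p) * Real.exp (-(n:ℝ) * (1 + p))) (Ioi 0) := by
    have h := (integrableOn_image_iff_integrableOn_abs_deriv_smul
      measurableSet_Ioi hder1 hinj1 g).mp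
      (by rw [himg1]; exact hgInt.mono_set fun x hx => hx.1)
    refine h.congr_fun (fun p hp => ?_) measurableSet_Ioi
    have ht : (1:ℝ) < 1 + p := by have := mem_Ioi.mp hp; linarith
    beta_reduce
    rw [abs_of_neg (dneg p hp), smul_eq_mul]
    congr 1
    show Real.exp (-(n:ℝ) * (s₁ (1+p) - Real.log (s₁ (1+p)))) = _
    rw [(h₁ _ ht).2]
  -- splitting the integral
  have hsplit : ∫ x in Ioi (0:ℝ), g x = (∫ x in Ioo (0:ℝ) 1, g x) + ∫ x in Ioi (1:ℝ), g x := by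
    have hu : Ioi (0:ℝ) = Ioo 0 1 ∪ Ici 1 := (Ioo_union_Ici_eq_Ioi zero_lt_one).symm
    rw [hu, setIntegral_union (fun s hs ht => by
          exact fun x hx => absurd ((hs hx).2) (not_lt.mpr (ht hx)))
        measurableSet_Ici
        (hgInt.mono_set Ioo_subset_Ioi_self)
        (hgInt.mono_set fun x hx => lt_of_lt_of_le zero_lt_one hx)]
    congr 1
    exact integral_Ici_eq_integral_Ioi
  -- Gamma integral
  have hfact : (n.factorial : ℝ) = ∫ x in Ioi (0:ℝ), Real.exp (-x) * x ^ n := by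
    rw [← Real.Gamma_nat_eq_factorial, Real.Gamma_eq_integral (by positivity)]
    refine setIntegral_congr_fun measurableSet_Ioi fun x hx => ?_
    rw [add_sub_cancel_right, Real.rpow_natCast]
  have hscale : ∫ x in Ioi (0:ℝ), Real.exp (-x) * x ^ n
      = (n:ℝ) * ∫ x in Ioi (0:ℝ), Real.exp (-((n:ℝ)*x)) * ((n:ℝ)*x) ^ n := by
    have h := integral_comp_mul_left_Ioi (fun x : ℝ => Real.exp (-x) * x ^ n) 0
      (b := (n:ℝ)) (by positivity)
    rw [mul_zero] at h
    rw [h, smul_eq_mul, ← mul_assoc, mul_inv_cancel₀ (by positivity), one_mul]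
  have hC : ∫ x in Ioi (0:ℝ), Real.exp (-((n:ℝ)*x)) * ((n:ℝ)*x) ^ n
      = (n:ℝ)^n * ∫ x in Ioi (0:ℝ), g x := by
    rw [← integral_const_mul]
    refine setIntegral_congr_fun measurableSet_Ioi fun x hx => ?_
    rw [← hgEq x hx, mul_pow]
    ring
  have hfinal : (∫ p in Ioi (0:ℝ), Real.exp (-(n:ℝ) * p) * (deriv s₂ (1 + p) - deriv s₁ (1 + p)))
      = Real.exp (n:ℝ) * ∫ x in Ioi (0:ℝ), g x := by
    rw [hsplit, hsub1, hsub2, ← integral_add hint1 hint2, ← integral_const_mul]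
    refine setIntegral_congr_fun measurableSet_Ioi fun p hp => ?_
    have hexp : Real.exp ((n:ℝ)) * Real.exp (-(n:ℝ)*(1+p)) = Real.exp (-(n:ℝ)*p) := by
      rw [← Real.exp_add]; congr 1; ring
    rw [← hexp]
    ring
  rw [hfact, hscale, hC, hfinal,
    show (n:ℝ)^(n+1) * Real.exp (-(n:ℝ)) * (Real.exp (n:ℝ) * ∫ x in Ioi (0:ℝ), g x)
      = (n:ℝ)^(n+1) * (Real.exp (-(n:ℝ)) * Real.exp (n:ℝ)) * ∫ x in Ioi (0:ℝ), g x from by ring,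
    ← Real.exp_add, neg_add_cancel, Real.exp_zero, mul_one, pow_succ]
  ring
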